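/- For any connected undirected graph G: (1) the decoding information of G equals the compressing information of G: D(G) = H¹(G) − H(G) = C(G); and (2) for every k ≥ 2, D^k(G) = H¹(G) − H^k(G) = C^k(G). -/

import Mathlib

open Finset

open scoped Classical

/-- An encoding tree over a finite vertex set `V`: a rooted tree whose nodes carry
nonempty subsets (markers) of `V`, the root carries `V`, the markers of the children
of any non-leaf node partition the node's marker, every non-leaf node has at least
two children, and leaves carry singletons. -/
structure EncTree (V : Type) [Fintype V] [DecidableEq V] : Type 1 where
  node : Type
  [fin : Fintype node]
  [deq : DecidableEq node]
  root : node
  parent : node → node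
  parent_root : parent root = root
  depth : node → ℕ
  depth_root : depth root = 0
  depth_parent : ∀ a, a ≠ root → depth a = depth (parent a) + 1
  mark : node → Finset V
  mark_root : mark root = Finset.univ
  mark_nonempty : ∀ a, (mark a).Nonempty
  mark_subset : ∀ a, a ≠ root → mark a ⊆ mark (parent a)
  children_partition : ∀ a, (∃ b, b ≠ a ∧ parent b = a) →
    ∀ x ∈ mark a, ∃! b, b ≠ a ∧ parent b = a ∧ x ∈ mark b
  children_two : ∀ a b, b ≠ a → parent b = a → ∃ c, c ≠ a ∧ c ≠ b ∧ parent c = a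
  leaf_singleton : ∀ a, (∀ b, b ≠ a → parent b ≠ a) → (mark a).card = 1

attribute [instance] EncTree.fin EncTree.deq

namespace SiLeM

variable {V : Type} [Fintype V] [DecidableEq V]

/-- A node of an encoding tree is a leaf if it has no children. -/
def IsLeaf (T : EncTree V) (a : T.node) : Prop :=
  ∀ b, b ≠ a → T.parent b ≠ a

/-- Volume of a set of vertices: total degree. -/
noncomputable def vol (G : SimpleGraph V) (A : Finset V) : ℝ :=
  ∑ v ∈ A, (G.degree v : ℝ)

/-- Volume of the graph: total degree of all vertices. -/
noncomputable def volG (G : SimpleGraph V) : ℝ := ∑ v : V, (G.degree v : ℝ)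

/-- `g_A`: the number of edges with exactly one endpoint in `A`
(counted as ordered pairs entering `A`). -/
noncomputable def ecut (G : SimpleGraph V) (A : Finset V) : ℝ :=
  ((Finset.univ.filter
      (fun p : V × V => G.Adj p.1 p.2 ∧ p.1 ∉ A ∧ p.2 ∈ A)).card : ℝ)

/-- Structural entropy of `G` given by the encoding tree `T`. -/
noncomputable def HT (G : SimpleGraph V) (T : EncTree V) : ℝ :=
  -∑ a ∈ Finset.univ.filter (fun a : T.node => a ≠ T.root),
      (ecut G (T.mark a) / volG G) *
        Real.logb 2 (vol G (T.mark a) / vol G (T.mark (T.parent a)))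

/-- One-dimensional structural entropy: Shannon entropy of the degree distribution. -/
noncomputable def H1 (G : SimpleGraph V) : ℝ :=
  -∑ v : V, ((G.degree v : ℝ) / volG G) * Real.logb 2 ((G.degree v : ℝ) / volG G)

/-- Compressing information of `G` given by the encoding tree `T`. -/
noncomputable def CT (G : SimpleGraph V) (T : EncTree V) : ℝ :=
  -∑ a ∈ Finset.univ.filter (fun a : T.node => a ≠ T.root),
      ((vol G (T.mark a) - ecut G (T.mark a)) / volG G) *
        Real.logb 2 (vol G (T.mark a) / vol G (T.mark (T.parent a)))

/-- Structural entropy of `G`: minimum over all encoding trees. -/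
noncomputable def SE (G : SimpleGraph V) : ℝ :=
  sInf {x | ∃ T : EncTree V, x = HT G T}

/-- `k`-dimensional structural entropy: minimum over encoding trees of height ≤ k. -/
noncomputable def SEk (G : SimpleGraph V) (k : ℕ) : ℝ :=
  sInf {x | ∃ T : EncTree V, (∀ a, T.depth a ≤ k) ∧ x = HT G T}

/-- Compressing information of `G`: maximum over all encoding trees. -/
noncomputable def CInfo (G : SimpleGraph V) : ℝ :=
  sSup {x | ∃ T : EncTree V, x = CT G T}

/-- `k`-dimensional compressing information. -/
noncomputable def Ck (G : SimpleGraph V) (k : ℕ) : ℝ :=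
  sSup {x | ∃ T : EncTree V, (∀ a, T.depth a ≤ k) ∧ x = CT G T}

/-- Decoding information of `G`. -/
noncomputable def DInfo (G : SimpleGraph V) : ℝ :=
  sSup {x | ∃ T : EncTree V, x = H1 G - HT G T}

/-- `k`-dimensional decoding information. -/
noncomputable def Dk (G : SimpleGraph V) (k : ℕ) : ℝ :=
  sSup {x | ∃ T : EncTree V, (∀ a, T.depth a ≤ k) ∧ x = H1 G - HT G T}

/-- Conductance of a subset `S`. -/
noncomputable def condS (G : SimpleGraph V) (S : Finset V) : ℝ :=
  ecut G S / min (vol G S) (vol G Sᶜ)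

/-- Conductance of the graph. -/
noncomputable def conductance (G : SimpleGraph V) : ℝ :=
  sInf {x | ∃ S : Finset V, S.Nonempty ∧ S ≠ Finset.univ ∧ x = condS G S}

/-- `H̃(Y = β | X = α)` for an edge `(x, y)` with codewords `α, β`: the sum is over
the nodes `δ` with `γ ⊂ δ ⊆ β` where `γ` is the longest common initial segment of
`α` and `β`; these are exactly the nodes whose marker contains `y` but not `x`. -/
noncomputable def Htilde (G : SimpleGraph V) (T : EncTree V) (x y : V) : ℝ :=
  -∑ a ∈ Finset.univ.filter (fun a : T.node => y ∈ T.mark a ∧ x ∉ T.mark a),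
      Real.logb 2 (vol G (T.mark a) / vol G (T.mark (T.parent a)))

/-- `Ĩ(X = α; Y = β)` for an edge `(x, y)`: the sum over the nodes `δ` with
`λ ⊂ δ ⊆ γ`, i.e. the non-root nodes whose marker contains both `x` and `y`. -/
noncomputable def Itilde (G : SimpleGraph V) (T : EncTree V) (x y : V) : ℝ :=
  -∑ a ∈ Finset.univ.filter
      (fun a : T.node => a ≠ T.root ∧ x ∈ T.mark a ∧ y ∈ T.mark a),
      Real.logb 2 (vol G (T.mark a) / vol G (T.mark (T.parent a)))

end SiLeM


section Aux

variable {V : Type} [Fintype V] [DecidableEq V]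

namespace EncTree

lemma eq_root_of_depth_zero (T : EncTree V) {a : T.node} (h : T.depth a = 0) :
    a = T.root := by
  by_contra hne
  rw [T.depth_parent a hne] at h
  exact Nat.succ_ne_zero _ h

lemma ne_parent (T : EncTree V) {a : T.node} (h : a ≠ T.root) : a ≠ T.parent a := by
  intro heq
  have h2 := T.depth_parent a h
  rw [← heq] at h2
  omega

lemma child_ne_root (T : EncTree V) {a b : T.node} (hne : b ≠ a) (hp : T.parent b = a) :
    b ≠ T.root := by
  intro h; subst h; rw [T.parent_root] at hp; exact hne hp

lemma uniq_at_depth (T : EncTree V) (v : V) :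
    ∀ d (a b : T.node), v ∈ T.mark a → v ∈ T.mark b →
      T.depth a = d → T.depth b = d → a = b := by
  intro d
  induction d with
  | zero =>
    intro a b _ _ ha hb
    rw [T.eq_root_of_depth_zero ha, T.eq_root_of_depth_zero hb]
  | succ d ih =>
    intro a b hva hvb ha hb
    have hane : a ≠ T.root := fun h => by rw [h, T.depth_root] at ha; omega
    have hbne : b ≠ T.root := fun h => by rw [h, T.depth_root] at hb; omega
    have hda := T.depth_parent a hane
    have hdb := T.depth_parent b hbne
    have hpv_a : v ∈ T.mark (T.parent a) := T.mark_subset a hane hva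
    have hpv_b : v ∈ T.mark (T.parent b) := T.mark_subset b hbne hvb
    have hpp : T.parent a = T.parent b := ih _ _ hpv_a hpv_b (by omega) (by omega)
    have hap : a ≠ T.parent a := T.ne_parent hane
    have hbp : b ≠ T.parent a := by rw [hpp]; exact T.ne_parent hbne
    obtain ⟨c, _, hc⟩ := T.children_partition (T.parent a) ⟨a, hap, rfl⟩ v hpv_a
    have h1 : a = c := hc a ⟨hap, rfl, hva⟩
    have h2 : b = c := hc b ⟨hbp, hpp.symm, hvb⟩
    rw [h1, h2]

lemma exists_ancestor (T : EncTree V) (v : V) {l : T.node} (hv : v ∈ T.mark l) :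
    ∀ j, j ≤ T.depth l → ∃ c, v ∈ T.mark c ∧ T.depth c = T.depth l - j := by
  intro j
  induction j with
  | zero => intro _; exact ⟨l, hv, by omega⟩
  | succ j ih =>
    intro hj
    obtain ⟨c, hvc, hdc⟩ := ih (by omega)
    have hcne : c ≠ T.root := fun h => by rw [h, T.depth_root] at hdc; omega
    refine ⟨T.parent c, T.mark_subset c hcne hvc, ?_⟩
    have := T.depth_parent c hcne
    omega

/-- If `p` contains `v` and `p` is not the deepest node containing `v`,
then `p` has a child containing `v`. -/
lemma exists_child_mem (T : EncTree V) (v : V) {l p : T.node}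
    (hvl : v ∈ T.mark l) (hmax : ∀ a : T.node, v ∈ T.mark a → T.depth a ≤ T.depth l)
    (hvp : v ∈ T.mark p) (hpl : p ≠ l) :
    ∃ a, a ≠ p ∧ T.parent a = p ∧ v ∈ T.mark a := by
  by_cases hc : ∃ b, b ≠ p ∧ T.parent b = p
  · obtain ⟨a, ⟨h1, h2, h3⟩, _⟩ := T.children_partition p hc v hvp
    exact ⟨a, h1, h2, h3⟩
  · exfalso
    push_neg at hc
    have hlt : T.depth p < T.depth l := by
      rcases lt_or_eq_of_le (hmax p hvp) with h | h
      · exact h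
      · exact absurd (T.uniq_at_depth v (T.depth l) p l hvp hvl h rfl) hpl
    obtain ⟨c, hvc, hdc⟩ :=
      T.exists_ancestor v hvl (T.depth l - (T.depth p + 1)) (by omega)
    have hdc' : T.depth c = T.depth p + 1 := by omega
    have hcne : c ≠ T.root := fun h => by rw [h, T.depth_root] at hdc'; omega
    have hpar : v ∈ T.mark (T.parent c) := T.mark_subset c hcne hvc
    have hdp : T.depth (T.parent c) = T.depth p := by
      have := T.depth_parent c hcne; omega
    have hpc : T.parent c = p := T.uniq_at_depth v (T.depth p) _ p hpar hvp hdp rfl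
    have hcp : c ≠ p := fun h => by rw [h] at hdc'; omega
    exact hc c hcp hpc

end EncTree

namespace SiLeM

lemma volG_eq (G : SimpleGraph V) : volG G = vol G Finset.univ := rfl

lemma vol_nonneg (G : SimpleGraph V) (A : Finset V) : 0 ≤ vol G A :=
  Finset.sum_nonneg fun _ _ => Nat.cast_nonneg _

lemma vol_mono (G : SimpleGraph V) {A B : Finset V} (h : A ⊆ B) : vol G A ≤ vol G B :=
  Finset.sum_le_sum_of_subset_of_nonneg h fun _ _ _ => Nat.cast_nonneg _

lemma vol_pos (G : SimpleGraph V) (hdeg : ∀ w, 0 < G.degree w) {A : Finset V}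
    (hA : A.Nonempty) : 0 < vol G A :=
  Finset.sum_pos (fun w _ => by exact_mod_cast hdeg w) hA

/-- Per-vertex telescoping. -/
lemma sum_logb_chain (G : SimpleGraph V) (hdeg : ∀ w, 0 < G.degree w)
    (T : EncTree V) (v : V) :
    ∑ a ∈ Finset.univ.filter (fun a : T.node => a ≠ T.root ∧ v ∈ T.mark a),
        Real.logb 2 (vol G (T.mark a) / vol G (T.mark (T.parent a)))
      = Real.logb 2 ((G.degree v : ℝ) / volG G) := by
  classical
  set f : T.node → ℝ := fun a => Real.logb 2 (vol G (T.mark a)) with hf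
  set Av : Finset T.node := Finset.univ.filter (fun a => v ∈ T.mark a) with hAv
  have hrootAv : T.root ∈ Av := by simp [hAv, T.mark_root]
  obtain ⟨l, hlAv, hmax'⟩ := Av.exists_max_image T.depth ⟨T.root, hrootAv⟩
  have hvl : v ∈ T.mark l := (Finset.mem_filter.mp hlAv).2
  have hmax : ∀ a : T.node, v ∈ T.mark a → T.depth a ≤ T.depth l := by
    intro a ha; exact hmax' a (by simp [hAv, ha])
  set Sv : Finset T.node :=
    Finset.univ.filter (fun a : T.node => a ≠ T.root ∧ v ∈ T.mark a) with hSv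
  have hSvAv : Sv = Av.erase T.root := by
    ext a; simp [hSv, hAv, Finset.mem_erase, and_comm]
  -- l has no child containing v
  have hlnochild : ∀ a, a ≠ l → T.parent a = l → v ∈ T.mark a → False := by
    intro a hne hp hva
    have := hmax a hva
    have h2 := T.depth_parent a (T.child_ne_root hne hp)
    rw [hp] at h2
    omega
  -- image characterization
  have himg : Sv.image T.parent = Av.erase l := by
    ext p
    constructor
    · intro hp
      obtain ⟨a, haSv, rfl⟩ := Finset.mem_image.mp hp
      obtain ⟨hane, hva⟩ := (Finset.mem_filter.mp haSv).2
      have hvp : v ∈ T.mark (T.parent a) := T.mark_subset a hane hva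
      refine Finset.mem_erase.mpr ⟨?_, by simp [hAv, hvp]⟩
      intro h
      exact hlnochild a ((T.ne_parent hane).trans_eq h) h hva
    · intro hp
      obtain ⟨hpl, hpAv⟩ := Finset.mem_erase.mp hp
      have hvp : v ∈ T.mark p := (Finset.mem_filter.mp hpAv).2
      obtain ⟨a, hanep, hpa, hva⟩ := T.exists_child_mem v hvl hmax hvp hpl
      refine Finset.mem_image.mpr ⟨a, ?_, hpa⟩
      simp [hSv, T.child_ne_root hanep hpa, hva]
  -- injectivity of parent on Sv
  have hinj : ∀ x ∈ Sv, ∀ y ∈ Sv, T.parent x = T.parent y → x = y := by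
    intro x hx y hy hxy
    obtain ⟨hxne, hvx⟩ := (Finset.mem_filter.mp hx).2
    obtain ⟨hyne, hvy⟩ := (Finset.mem_filter.mp hy).2
    have hvp : v ∈ T.mark (T.parent x) := T.mark_subset x hxne hvx
    obtain ⟨c, _, hc⟩ := T.children_partition (T.parent x)
      ⟨x, T.ne_parent hxne, rfl⟩ v hvp
    have h1 : x = c := hc x ⟨T.ne_parent hxne, rfl, hvx⟩
    have h2 : y = c := hc y ⟨by rw [hxy]; exact T.ne_parent hyne, hxy.symm, hvy⟩
    rw [h1, h2]
  -- mark l = {v}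
  have hlchildless : ∀ b, b ≠ l → T.parent b ≠ l := by
    intro b hb hpb
    obtain ⟨a, ⟨h1, h2, h3⟩, _⟩ := T.children_partition l ⟨b, hb, hpb⟩ v hvl
    exact hlnochild a h1 h2 h3
  have hmarkl : T.mark l = {v} := by
    obtain ⟨w, hw⟩ := Finset.card_eq_one.mp (T.leaf_singleton l hlchildless)
    rw [hw] at hvl ⊢
    rw [Finset.mem_singleton.mp hvl]
  -- positivity
  have hvolpos : ∀ a : T.node, (0:ℝ) < vol G (T.mark a) := fun a =>
    vol_pos G hdeg (T.mark_nonempty a)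
  -- main computation
  have hstep : ∀ a ∈ Sv,
      Real.logb 2 (vol G (T.mark a) / vol G (T.mark (T.parent a)))
        = f a - f (T.parent a) := by
    intro a _
    exact Real.logb_div (hvolpos a).ne' (hvolpos (T.parent a)).ne'
  calc ∑ a ∈ Sv, Real.logb 2 (vol G (T.mark a) / vol G (T.mark (T.parent a)))
      = ∑ a ∈ Sv, (f a - f (T.parent a)) := Finset.sum_congr rfl hstep
    _ = ∑ a ∈ Sv, f a - ∑ a ∈ Sv, f (T.parent a) := Finset.sum_sub_distrib _ _
    _ = ∑ a ∈ Sv, f a - ∑ p ∈ Sv.image T.parent, f p := by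
        rw [← Finset.sum_image hinj]
    _ = (∑ a ∈ Av, f a - f T.root) - (∑ a ∈ Av, f a - f l) := by
        rw [himg, hSvAv, Finset.sum_erase_eq_sub hrootAv, Finset.sum_erase_eq_sub hlAv]
    _ = f l - f T.root := by ring
    _ = Real.logb 2 ((G.degree v : ℝ) / volG G) := by
        rw [hf]
        simp only [hmarkl, T.mark_root]
        rw [← volG_eq]
        have h1 : vol G {v} = (G.degree v : ℝ) := Finset.sum_singleton _ _
        rw [h1, Real.logb_div (by exact_mod_cast (hdeg v).ne')
          (by rw [volG_eq]; exact (vol_pos G hdeg ⟨v, Finset.mem_univ v⟩).ne')]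

/-- The fundamental identity `H¹(G) = H^T(G) + C^T(G)`. -/
lemma H1_eq_HT_add_CT (G : SimpleGraph V) (hconn : G.Connected) (T : EncTree V) :
    H1 G = HT G T + CT G T := by
  classical
  have hV : Nonempty V := hconn.nonempty
  rcases subsingleton_or_nontrivial V with hsub | hnt
  · -- degenerate case |V| = 1
    have hall : ∀ a : T.node, a = T.root := by
      by_contra h
      push_neg at h
      obtain ⟨a0, ha0⟩ := h
      obtain ⟨b, hb, hmin⟩ := (Finset.univ.filter (fun a : T.node => a ≠ T.root)).exists_min_image
        T.depth ⟨a0, by simp [ha0]⟩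
      have hbne : b ≠ T.root := (Finset.mem_filter.mp hb).2
      have hpb : T.parent b = T.root := by
        by_contra hp
        have hmem : T.parent b ∈ Finset.univ.filter (fun a : T.node => a ≠ T.root) := by
          simp [hp]
        have := hmin _ hmem
        have := T.depth_parent b hbne
        omega
      obtain ⟨c, hc1, hc2, hc3⟩ := T.children_two T.root b hbne hpb
      obtain ⟨v, hv⟩ := T.mark_nonempty b
      obtain ⟨w, hw⟩ := T.mark_nonempty c
      rw [Subsingleton.elim w v] at hw
      have hvroot : v ∈ T.mark T.root := by rw [T.mark_root]; exact Finset.mem_univ v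
      obtain ⟨e, _, he⟩ := T.children_partition T.root ⟨b, hbne, hpb⟩ v hvroot
      have h1 : b = e := he b ⟨hbne, hpb, hv⟩
      have h2 : c = e := he c ⟨hc1, hc3, hw⟩
      exact hc2 (h2.trans h1.symm)
    have hempty : Finset.univ.filter (fun a : T.node => a ≠ T.root) = ∅ := by
      apply Finset.filter_eq_empty_iff.mpr
      intro a _
      simp [hall a]
    have hdeg0 : ∀ w : V, G.degree w = 0 := by
      intro w
      by_contra h
      have hpos : 0 < G.degree w := Nat.pos_of_ne_zero h
      obtain ⟨u, hu⟩ := (SimpleGraph.degree_pos_iff_exists_adj G w).mp hpos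
      exact G.ne_of_adj hu (Subsingleton.elim w u)
    have hH1 : H1 G = 0 := by
      unfold H1
      rw [neg_eq_zero]
      apply Finset.sum_eq_zero
      intro w _
      rw [hdeg0 w]
      simp
    rw [hH1]
    unfold HT CT
    rw [hempty]
    simp
  · -- nondegenerate case
    have hdeg : ∀ w, 0 < G.degree w := by
      intro w
      obtain ⟨u, hu⟩ := exists_ne w
      obtain ⟨p⟩ := hconn.preconnected w u
      rw [SimpleGraph.degree_pos_iff_exists_adj]
      cases p with
      | nil => exact absurd rfl hu
      | cons h _ => exact ⟨_, h⟩
    set F : Finset T.node := Finset.univ.filter (fun a : T.node => a ≠ T.root) with hF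
    set L : T.node → ℝ :=
      fun a => Real.logb 2 (vol G (T.mark a) / vol G (T.mark (T.parent a))) with hL
    have hsum : HT G T + CT G T = -∑ a ∈ F, (vol G (T.mark a) / volG G) * L a := by
      unfold HT CT
      rw [← neg_add, ← Finset.sum_add_distrib]
      congr 1
      apply Finset.sum_congr rfl
      intro a _
      ring
    rw [hsum]
    have hkey : ∑ a ∈ F, vol G (T.mark a) * L a
        = ∑ v : V, (G.degree v : ℝ) * Real.logb 2 ((G.degree v : ℝ) / volG G) := by
      have h1 : ∀ a ∈ F, vol G (T.mark a) * L a
          = ∑ v : V, (if v ∈ T.mark a then (G.degree v : ℝ) * L a else 0) := by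
        intro a _
        rw [Finset.sum_ite_mem, Finset.univ_inter]
        unfold vol
        rw [Finset.sum_mul]
      rw [Finset.sum_congr rfl h1, Finset.sum_comm]
      apply Finset.sum_congr rfl
      intro v _
      rw [← Finset.sum_filter, Finset.filter_filter]
      rw [← sum_logb_chain G hdeg T v, Finset.mul_sum]
    have hrw : ∀ a ∈ F, (vol G (T.mark a) / volG G) * L a
        = vol G (T.mark a) * L a / volG G := fun a _ => by ring
    rw [Finset.sum_congr rfl hrw, ← Finset.sum_div, hkey]
    unfold H1
    congr 1
    rw [Finset.sum_div]
    exact Finset.sum_congr rfl fun v _ => by ring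

/-- The trivial one-node encoding tree (when `|V| = 1`). -/
noncomputable def unitTree (h1 : Fintype.card V = 1) : EncTree V where
  node := PUnit
  root := PUnit.unit
  parent := fun _ => PUnit.unit
  parent_root := rfl
  depth := fun _ => 0
  depth_root := rfl
  depth_parent := fun a ha => absurd (Subsingleton.elim a PUnit.unit) ha
  mark := fun _ => Finset.univ
  mark_root := rfl
  mark_nonempty := fun _ => Finset.univ_nonempty_iff.mpr (Fintype.card_pos_iff.mp (by omega))
  mark_subset := fun _ _ => le_refl _
  children_partition := fun a ⟨b, hb, _⟩ => absurd (Subsingleton.elim b a) hb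
  children_two := fun a b hb _ => absurd (Subsingleton.elim b a) hb
  leaf_singleton := fun _ _ => by rw [Finset.card_univ, h1]

/-- The star encoding tree: root plus one leaf per vertex (when `|V| ≥ 2`). -/
noncomputable def starTree [Nontrivial V] : EncTree V where
  node := Option V
  root := none
  parent := fun _ => none
  parent_root := rfl
  depth := fun a => if a = none then 0 else 1
  depth_root := by simp
  depth_parent := fun a ha => by simp [ha]
  mark := fun a => a.elim Finset.univ (fun v => {v})
  mark_root := rfl
  mark_nonempty := fun a => by
    cases a with
    | none => exact Finset.univ_nonempty
    | some v => exact ⟨v, Finset.mem_singleton_self v⟩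
  mark_subset := fun a _ => Finset.subset_univ _
  children_partition := fun a hch x _ => by
    cases a with
    | some v =>
      obtain ⟨b, _, hpb⟩ := hch
      exact absurd hpb (by simp)
    | none =>
      refine ⟨some x, ⟨by simp, rfl, by simp⟩, ?_⟩
      rintro b ⟨hb1, _, hb3⟩
      cases b with
      | none => exact absurd rfl hb1
      | some w =>
        simp only [Option.elim, Finset.mem_singleton] at hb3
        rw [hb3]
  children_two := fun a b hb hpb => by
    cases b with
    | none => exact absurd hpb hb
    | some v =>
      obtain ⟨w, hw⟩ := exists_ne v
      exact ⟨some w, by rw [← hpb]; simp, by simp [hw], hpb⟩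
  leaf_singleton := fun a ha => by
    cases a with
    | some v => simp
    | none =>
      obtain ⟨x⟩ := (inferInstance : Nonempty V)
      exact absurd rfl (ha (some x) (by simp))

lemma exists_tree (hV : Nonempty V) : ∃ T : EncTree V, ∀ a, T.depth a ≤ 1 := by
  rcases subsingleton_or_nontrivial V with hsub | hnt
  · have h1 : Fintype.card V = 1 := by
      have := Fintype.card_le_one_iff_subsingleton.mpr hsub
      have := Fintype.card_pos_iff.mpr hV
      omega
    exact ⟨unitTree h1, fun _ => by simp [unitTree]⟩
  · refine ⟨starTree, fun a => ?_⟩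
    simp only [starTree]
    split <;> omega

lemma HT_nonneg (G : SimpleGraph V) (T : EncTree V) : 0 ≤ HT G T := by
  unfold HT
  rw [neg_nonneg]
  apply Finset.sum_nonpos
  intro a ha
  have hane : a ≠ T.root := (Finset.mem_filter.mp ha).2
  apply mul_nonpos_of_nonneg_of_nonpos
  · apply div_nonneg
    · exact Nat.cast_nonneg _
    · exact Finset.sum_nonneg fun _ _ => Nat.cast_nonneg _
  · apply Real.logb_nonpos one_lt_two
    · exact div_nonneg (vol_nonneg G _) (vol_nonneg G _)
    · exact div_le_one_of_le₀ (vol_mono G (T.mark_subset a hane)) (vol_nonneg G _)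

lemma sSup_const_sub {S : Set ℝ} (hne : S.Nonempty) (hbd : BddBelow S) (c : ℝ) :
    sSup ((fun x => c - x) '' S) = c - sInf S := by
  apply IsLUB.csSup_eq ?_ (hne.image _)
  constructor
  · rintro x ⟨h, hh, rfl⟩
    have : sInf S ≤ h := csInf_le hbd hh
    simp only
    linarith
  · intro b hb
    have hlb : c - b ≤ sInf S := by
      apply le_csInf hne
      intro h hh
      have : c - h ≤ b := hb ⟨h, hh, rfl⟩
      linarith
    simp only [mem_upperBounds] at hb
    linarith

end SiLeM

end Aux

/-- Compressing and decoding principle: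
`D(G) = H¹(G) − H(G) = C(G)`, and for every `k ≥ 2`,
`D^k(G) = H¹(G) − H^k(G) = C^k(G)`. -/
theorem stmt8 {V : Type} [Fintype V] [DecidableEq V]
    (G : SimpleGraph V) (hconn : G.Connected) :
    SiLeM.DInfo G = SiLeM.H1 G - SiLeM.SE G ∧
    SiLeM.DInfo G = SiLeM.CInfo G ∧
    ∀ k : ℕ, 2 ≤ k →
      SiLeM.Dk G k = SiLeM.H1 G - SiLeM.SEk G k ∧ SiLeM.Dk G k = SiLeM.Ck G k := by
  classical
  have hV : Nonempty V := hconn.nonempty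
  obtain ⟨T0, hT0⟩ := SiLeM.exists_tree (V := V) hV
  have hkey : ∀ T : EncTree V, SiLeM.H1 G - SiLeM.HT G T = SiLeM.CT G T := fun T => by
    have := SiLeM.H1_eq_HT_add_CT G hconn T; linarith
  have hDset : {x | ∃ T : EncTree V, x = SiLeM.H1 G - SiLeM.HT G T}
      = (fun x => SiLeM.H1 G - x) '' {x | ∃ T : EncTree V, x = SiLeM.HT G T} := by
    ext x; constructor
    · rintro ⟨T, rfl⟩; exact ⟨SiLeM.HT G T, ⟨T, rfl⟩, rfl⟩
    · rintro ⟨y, ⟨T, rfl⟩, rfl⟩; exact ⟨T, rfl⟩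
  have hCset : {x | ∃ T : EncTree V, x = SiLeM.H1 G - SiLeM.HT G T}
      = {x | ∃ T : EncTree V, x = SiLeM.CT G T} := by
    ext x; constructor
    · rintro ⟨T, rfl⟩; exact ⟨T, hkey T⟩
    · rintro ⟨T, rfl⟩; exact ⟨T, (hkey T).symm⟩
  have hSne : {x | ∃ T : EncTree V, x = SiLeM.HT G T}.Nonempty := ⟨_, T0, rfl⟩
  have hSbd : BddBelow {x | ∃ T : EncTree V, x = SiLeM.HT G T} :=
    ⟨0, by rintro x ⟨T, rfl⟩; exact SiLeM.HT_nonneg G T⟩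
  refine ⟨?_, ?_, ?_⟩
  · unfold SiLeM.DInfo SiLeM.SE
    rw [hDset, SiLeM.sSup_const_sub hSne hSbd]
  · unfold SiLeM.DInfo SiLeM.CInfo
    rw [hCset]
  · intro k hk
    have hDkset : {x | ∃ T : EncTree V, (∀ a, T.depth a ≤ k) ∧ x = SiLeM.H1 G - SiLeM.HT G T}
        = (fun x => SiLeM.H1 G - x) ''
            {x | ∃ T : EncTree V, (∀ a, T.depth a ≤ k) ∧ x = SiLeM.HT G T} := by
      ext x; constructor
      · rintro ⟨T, hT, rfl⟩; exact ⟨SiLeM.HT G T, ⟨T, hT, rfl⟩, rfl⟩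
      · rintro ⟨y, ⟨T, hT, rfl⟩, rfl⟩; exact ⟨T, hT, rfl⟩
    have hCkset : {x | ∃ T : EncTree V, (∀ a, T.depth a ≤ k) ∧ x = SiLeM.H1 G - SiLeM.HT G T}
        = {x | ∃ T : EncTree V, (∀ a, T.depth a ≤ k) ∧ x = SiLeM.CT G T} := by
      ext x; constructor
      · rintro ⟨T, hT, rfl⟩; exact ⟨T, hT, hkey T⟩
      · rintro ⟨T, hT, rfl⟩; exact ⟨T, hT, (hkey T).symm⟩
    have hSkne : {x | ∃ T : EncTree V, (∀ a, T.depth a ≤ k) ∧ x = SiLeM.HT G T}.Nonempty :=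
      ⟨_, T0, fun a => (hT0 a).trans (by omega), rfl⟩
    have hSkbd : BddBelow {x | ∃ T : EncTree V, (∀ a, T.depth a ≤ k) ∧ x = SiLeM.HT G T} :=
      ⟨0, by rintro x ⟨T, _, rfl⟩; exact SiLeM.HT_nonneg G T⟩
    constructor
    · unfold SiLeM.Dk SiLeM.SEk
      rw [hDkset, SiLeM.sSup_const_sub hSkne hSkbd]
    · unfold SiLeM.Dk SiLeM.Ck
      rw [hCkset]
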